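/- For every positive integer N and all real numbers δ > 0 and K > 0, there exists ε > 0 with the following property: for every K-Lipschitz function f : [0,1]^N → ℝ satisfying max f − min f ≤ 2ε, and every subset A ⊆ [0,1]^N of full Lebesgue measure, there exist a point τ∞ in the open cube (0,1)^N and N+1 sequences (τ^{j,m})_{m≥1} contained in A, for j = 1, …, N+1, such that: (1) for each j, τ^{j,m} → τ∞ as m → ∞; (2) f is differentiable at τ^{j,m} for every j and m; (3) for each j, the gradients ∇f(τ^{j,m}) converge as m → ∞ to a vector v_j ∈ ℝ^N, and the Euclidean distance from the origin to the convex hull of {v_1, …, v_{N+1}} is less than δ. -/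

import Mathlib

open MeasureTheory Filter

/-- The closed unit cube `[0,1]^N` in `EuclideanSpace ℝ (Fin N)`. -/
def unitCube (N : ℕ) : Set (EuclideanSpace ℝ (Fin N)) :=
  (WithLp.ofLp : EuclideanSpace ℝ (Fin N) → (Fin N → ℝ)) ⁻¹' (Set.univ.pi fun _ => Set.Icc (0 : ℝ) 1)

open Metric Topology

lemma euclid_coord_abs_le {N : ℕ} (x : EuclideanSpace ℝ (Fin N)) (i : Fin N) : |x i| ≤ ‖x‖ := by
  have h1 : |x i| ^ 2 ≤ ∑ j, |x j| ^ 2 := by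
    refine Finset.single_le_sum (f := fun j => |x j| ^ 2) (fun j _ => by positivity) (Finset.mem_univ i)
  have h2 : ‖x‖ = Real.sqrt (∑ j, |x j| ^ 2) := by
    rw [EuclideanSpace.norm_eq]
    norm_num
  rw [h2]
  have := Real.sqrt_le_sqrt h1
  rwa [Real.sqrt_sq_eq_abs, abs_abs] at this

lemma euclid_norm_le_of_coord {N : ℕ} (x : EuclideanSpace ℝ (Fin N)) (M : ℝ) (hM : 0 ≤ M)
    (h : ∀ i, |x i| ≤ M) : ‖x‖ ≤ M * N := by
  have h2 : ‖x‖ = Real.sqrt (∑ j, |x j| ^ 2) := by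
    rw [EuclideanSpace.norm_eq]; norm_num
  have h1 : (∑ j, |x j| ^ 2) ≤ N * M ^ 2 := by
    calc (∑ j, |x j| ^ 2) ≤ ∑ _j : Fin N, M ^ 2 :=
          Finset.sum_le_sum fun j _ => by
            have := h j; nlinarith [abs_nonneg (x j)]
      _ = N * M ^ 2 := by simp [mul_comm]
  rw [h2]
  calc Real.sqrt (∑ j, |x j| ^ 2) ≤ Real.sqrt ((N:ℝ) * M ^ 2) := Real.sqrt_le_sqrt h1
    _ ≤ M * N := by
        rw [show (N:ℝ) * M ^ 2 = (M * N) * M  by ring]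
        rcases Nat.eq_zero_or_pos N with h | h
        · simp [h]
        · have hN1 : (1:ℝ) ≤ N := by exact_mod_cast h
          have : (M * N) * M ≤ (M*N) * (M*N) := by nlinarith
          calc Real.sqrt ((M*N)*M) ≤ Real.sqrt ((M*N)*(M*N)) := Real.sqrt_le_sqrt this
            _ = M * N := by rw [Real.sqrt_mul_self (by positivity)]

lemma quad_line_hasDerivAt {N : ℕ} (a u : EuclideanSpace ℝ (Fin N)) (c : ℝ) :
    HasDerivAt (fun t : ℝ => c * ‖a + t • u‖ ^ 2) (2 * c * (inner ℝ a u : ℝ)) 0 := by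
  have hfun : (fun t : ℝ => c * ‖a + t • u‖ ^ 2)
      = fun t : ℝ => c * ‖a‖^2 + (2 * c * (inner ℝ a u : ℝ)) * t + (c * ‖u‖^2) * t^2 := by
    funext t
    have := @norm_add_sq_real (EuclideanSpace ℝ (Fin N)) _ _ a (t • u)
    rw [this, real_inner_smul_right, norm_smul]
    simp [mul_pow]
    ring
  rw [hfun]
  have h1 : HasDerivAt (fun t : ℝ => c * ‖a‖^2 + (2 * c * (inner ℝ a u : ℝ)) * t + (c * ‖u‖^2) * t^2)
      (0 + (2 * c * (inner ℝ a u : ℝ)) * 1 + (c * ‖u‖^2) * (2 * 0 ^ 1)) 0 := by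
    exact (((hasDerivAt_const _ _).add (((hasDerivAt_id (0:ℝ)).const_mul _))).add
      (((hasDerivAt_pow 2 (0:ℝ))).const_mul _))
  simpa using h1

lemma sum_extend_eq {G : Type*} [AddCommMonoid G] {ι : Type*} [Fintype ι] {n : ℕ}
    (e : ι ↪ Fin (n+1)) (F : Fin (n+1) → G)
    (hF0 : ∀ j, (¬ ∃ i, e i = j) → F j = 0) : (∑ j, F j) = ∑ i, F (e i) := by
  rw [← Finset.sum_map Finset.univ e F]
  refine (Finset.sum_subset (Finset.subset_univ _) ?_).symm
  intro j _ hj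
  refine hF0 j ?_
  rintro ⟨i, hi⟩; exact hj (Finset.mem_map.2 ⟨i, Finset.mem_univ _, hi⟩)

lemma pad_convex {E : Type*} [AddCommGroup E] [Module ℝ E] {n : ℕ} {s : Set E}
    (ι : Type*) [Fintype ι] [Nonempty ι] (hcard : Fintype.card ι ≤ n + 1)
    (z : ι → E) (w : ι → ℝ) (hz : ∀ i, z i ∈ s) (hw : ∀ i, 0 ≤ w i) (hw1 : ∑ i, w i = 1) :
    ∃ (a : Fin (n+1) → ℝ) (y : Fin (n+1) → E), (∀ j, y j ∈ s) ∧ (∀ j, 0 ≤ a j) ∧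
      (∑ j, a j = 1) ∧ (∑ j, a j • y j = ∑ i, w i • z i) := by
  classical
  obtain ⟨e⟩ : Nonempty (ι ↪ Fin (n+1)) := by
    rw [Function.Embedding.nonempty_iff_card_le]
    simpa using hcard
  set a : Fin (n+1) → ℝ := Function.extend e w 0 with ha
  set y : Fin (n+1) → E := Function.extend e z (fun _ => z (Classical.arbitrary ι)) with hy
  have hae : ∀ i, a (e i) = w i := fun i => e.injective.extend_apply _ _ _
  have hye : ∀ i, y (e i) = z i := fun i => e.injective.extend_apply _ _ _
  have ha0 : ∀ j, (¬ ∃ i, e i = j) → a j = 0 := by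
    intro j hj; rw [ha, Function.extend_apply' _ _ _ hj]; rfl
  refine ⟨a, y, ?_, ?_, ?_, ?_⟩
  · intro j
    by_cases h : ∃ i, e i = j
    · obtain ⟨i, rfl⟩ := h; rw [hye]; exact hz i
    · rw [hy, Function.extend_apply' _ _ _ h]; exact hz _
  · intro j
    by_cases h : ∃ i, e i = j
    · obtain ⟨i, rfl⟩ := h; rw [hae]; exact hw i
    · rw [ha0 j h]
  · refine (sum_extend_eq e a (fun j h => ha0 j h)).trans ?_
    simp only [hae]; exact hw1
  · refine (sum_extend_eq e (fun j => a j • y j) (fun j h => by simp only [ha0 j h, zero_smul])).trans ?_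
    exact Finset.sum_congr rfl fun i _ => by rw [hae, hye]

set_option maxHeartbeats 2000000 in
lemma key_scale {N : ℕ} (K' : NNReal) (F : EuclideanSpace ℝ (Fin N) → ℝ)
    (hF : LipschitzWith K' F) (A : Set (EuclideanSpace ℝ (Fin N)))
    (hA0 : volume (unitCube N \ A) = 0)
    (xs c : EuclideanSpace ℝ (Fin N)) (α β : ℝ) (hα : 0 < α) (hβ : 0 < β)
    (hxc : ‖xs - c‖ ≤ 1/4) (hcube : Metric.closedBall c (1/2) ⊆ unitCube N)
    (hmin : ∀ x ∈ unitCube N, F xs + α * ‖xs - c‖^2 ≤ F x + α * ‖x - c‖^2)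
    (θ : ℝ) (hθ : 0 < θ) (hθ' : θ ≤ 1/16) :
    ∃ p : EuclideanSpace ℝ (Fin N), ‖p‖ ≤ α + β ∧
      p ∈ closure (convexHull ℝ ((gradient F) ''
        (Metric.closedBall xs θ ∩ A ∩ {z | DifferentiableAt ℝ F z}))) := by
  classical
  set K : ℝ := (K' : ℝ) with hKdef
  have hK0 : 0 ≤ K := K'.coe_nonneg
  set L : ℝ := K + 2*α + 2*β with hLdef
  have hL : 0 < L := by positivity
  set h : EuclideanSpace ℝ (Fin N) → ℝ :=
    fun x => F x + α * ‖x - c‖^2 + β * ‖x - xs‖^2 with hhdef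
  -- Lipschitz property of h on the ball of radius 3/4 around c
  have hLip : ∀ a b : EuclideanSpace ℝ (Fin N), a ∈ Metric.closedBall c (3/4) →
      b ∈ Metric.closedBall c (3/4) → |h a - h b| ≤ L * ‖a - b‖ := by
    intro a b ha hb
    have e1 : ‖a - c‖ ≤ 3/4 := by simpa [dist_eq_norm] using ha
    have e2 : ‖b - c‖ ≤ 3/4 := by simpa [dist_eq_norm] using hb
    have e3 : ‖a - xs‖ ≤ 1 := by
      have : a - xs = (a - c) + (c - xs) := by abel
      rw [this]
      have h4 : ‖c - xs‖ ≤ 1/4 := by rwa [norm_sub_rev] at hxc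
      calc ‖(a-c) + (c-xs)‖ ≤ ‖a-c‖ + ‖c-xs‖ := norm_add_le _ _
        _ ≤ 1 := by linarith
    have e4 : ‖b - xs‖ ≤ 1 := by
      have : b - xs = (b - c) + (c - xs) := by abel
      rw [this]
      have h4 : ‖c - xs‖ ≤ 1/4 := by rwa [norm_sub_rev] at hxc
      calc ‖(b-c) + (c-xs)‖ ≤ ‖b-c‖ + ‖c-xs‖ := norm_add_le _ _
        _ ≤ 1 := by linarith
    have hFab : |F a - F b| ≤ K * ‖a - b‖ := by
      have := hF.dist_le_mul a b
      rwa [Real.dist_eq, dist_eq_norm] at this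
    have d1 : |‖a - c‖ - ‖b - c‖| ≤ ‖a - b‖ := by
      have := abs_norm_sub_norm_le (a - c) (b - c)
      rwa [sub_sub_sub_cancel_right] at this
    have d2 : |‖a - xs‖ - ‖b - xs‖| ≤ ‖a - b‖ := by
      have := abs_norm_sub_norm_le (a - xs) (b - xs)
      rwa [sub_sub_sub_cancel_right] at this
    have q1 : |‖a - c‖^2 - ‖b - c‖^2| ≤ 2 * ‖a - b‖ := by
      have hq : ‖a-c‖^2 - ‖b-c‖^2 = (‖a-c‖ - ‖b-c‖) * (‖a-c‖ + ‖b-c‖) := by ring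
      rw [hq, abs_mul, abs_of_nonneg (show (0:ℝ) ≤ ‖a-c‖ + ‖b-c‖ by positivity)]
      calc |‖a-c‖ - ‖b-c‖| * (‖a-c‖ + ‖b-c‖) ≤ ‖a - b‖ * 2 :=
            mul_le_mul d1 (by linarith) (by positivity) (norm_nonneg _)
        _ = 2 * ‖a - b‖ := by ring
    have q2 : |‖a - xs‖^2 - ‖b - xs‖^2| ≤ 2 * ‖a - b‖ := by
      have hq : ‖a-xs‖^2 - ‖b-xs‖^2 = (‖a-xs‖ - ‖b-xs‖) * (‖a-xs‖ + ‖b-xs‖) := by ring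
      rw [hq, abs_mul, abs_of_nonneg (show (0:ℝ) ≤ ‖a-xs‖ + ‖b-xs‖ by positivity)]
      calc |‖a-xs‖ - ‖b-xs‖| * (‖a-xs‖ + ‖b-xs‖) ≤ ‖a - b‖ * 2 :=
            mul_le_mul d2 (by linarith) (by positivity) (norm_nonneg _)
        _ = 2 * ‖a - b‖ := by ring
    have expand : h a - h b = (F a - F b) + α * (‖a-c‖^2 - ‖b-c‖^2) + β * (‖a-xs‖^2 - ‖b-xs‖^2) := by
      simp only [hhdef]; ring
    rw [expand]
    have t1 : |(F a - F b) + α * (‖a-c‖^2 - ‖b-c‖^2) + β * (‖a-xs‖^2 - ‖b-xs‖^2)|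
        ≤ |F a - F b| + α * |‖a-c‖^2 - ‖b-c‖^2| + β * |‖a-xs‖^2 - ‖b-xs‖^2| := by
      calc |(F a - F b) + α * (‖a-c‖^2 - ‖b-c‖^2) + β * (‖a-xs‖^2 - ‖b-xs‖^2)|
          ≤ |(F a - F b) + α * (‖a-c‖^2 - ‖b-c‖^2)| + |β * (‖a-xs‖^2 - ‖b-xs‖^2)| := abs_add_le _ _
        _ ≤ |F a - F b| + |α * (‖a-c‖^2 - ‖b-c‖^2)| + |β * (‖a-xs‖^2 - ‖b-xs‖^2)| := by
            have := abs_add_le (F a - F b) (α * (‖a-c‖^2 - ‖b-c‖^2)); linarith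
        _ = |F a - F b| + α * |‖a-c‖^2 - ‖b-c‖^2| + β * |‖a-xs‖^2 - ‖b-xs‖^2| := by
            rw [abs_mul, abs_mul, abs_of_pos hα, abs_of_pos hβ]
    have t2 : α * |‖a-c‖^2 - ‖b-c‖^2| ≤ α * (2 * ‖a-b‖) := by
      exact mul_le_mul_of_nonneg_left q1 (le_of_lt hα)
    have t3 : β * |‖a-xs‖^2 - ‖b-xs‖^2| ≤ β * (2 * ‖a-b‖) := by
      exact mul_le_mul_of_nonneg_left q2 (le_of_lt hβ)
    have : L * ‖a - b‖ = K * ‖a-b‖ + α * (2*‖a-b‖) + β * (2*‖a-b‖) := by rw [hLdef]; ring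
    linarith
  -- the radius of mollification
  set r : ℝ := min (θ/2) (min (β*θ^2/(16*L)) (1/32)) with hrdef
  have hr : 0 < r := by
    apply lt_min (by positivity) (lt_min (by positivity) (by norm_num))
  have hr1 : r ≤ θ/2 := min_le_left _ _
  have hr2 : 2*L*r ≤ β*θ^2/8 := by
    have : r ≤ β*θ^2/(16*L) := le_trans (min_le_right _ _) (min_le_left _ _)
    have h2 : 2*L*r ≤ 2*L*(β*θ^2/(16*L)) := by nlinarith
    calc 2*L*r ≤ 2*L*(β*θ^2/(16*L)) := h2
      _ = β*θ^2/8 := by field_simp; ring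
  have hr3 : r ≤ 1/32 := le_trans (min_le_right _ _) (min_le_right _ _)
  have hθ32 : θ/2 ≤ 1/32 := by linarith
  -- the mollification measure
  set V : ENNReal := volume (Metric.closedBall (0 : EuclideanSpace ℝ (Fin N)) r) with hVdef
  have hV0 : V ≠ 0 := (measure_closedBall_pos volume 0 hr).ne'
  have hVtop : V ≠ ⊤ := measure_closedBall_lt_top.ne
  set μ : Measure (EuclideanSpace ℝ (Fin N)) :=
    V⁻¹ • volume.restrict (Metric.closedBall 0 r) with hμdef
  haveI hμprob : IsProbabilityMeasure μ := by
    constructor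
    rw [hμdef, Measure.smul_apply, Measure.restrict_apply MeasurableSet.univ, Set.univ_inter,
      ← hVdef, smul_eq_mul]
    exact ENNReal.inv_mul_cancel hV0 hVtop
  have hae_ball : ∀ᵐ y ∂μ, y ∈ Metric.closedBall (0 : EuclideanSpace ℝ (Fin N)) r := by
    rw [hμdef]
    exact Measure.ae_smul_measure (ae_restrict_mem measurableSet_closedBall) _
  have hae_trans : ∀ (x : EuclideanSpace ℝ (Fin N)) (S : Set (EuclideanSpace ℝ (Fin N))),
      volume S = 0 → ∀ᵐ y ∂μ, (x + y) ∉ S := by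
    intro x S hS
    have hb : volume ((fun y => x + y) ⁻¹' S) = 0 := by
      rw [measure_preimage_add volume x S]; exact hS
    have hμb : μ ((fun y => x + y) ⁻¹' S) = 0 := by
      rw [hμdef, Measure.smul_apply, smul_eq_mul]
      have : volume.restrict (Metric.closedBall 0 r) ((fun y => x + y) ⁻¹' S) = 0 :=
        le_antisymm (le_trans (Measure.restrict_le_self _) hb.le) zero_le
      rw [this, mul_zero]
    exact (ae_iff).mpr (by simpa using (show μ {a | x + a ∈ S} = 0 from hμb))
  have hdiffae : ∀ (x : EuclideanSpace ℝ (Fin N)), ∀ᵐ y ∂μ, DifferentiableAt ℝ F (x + y) := by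
    intro x
    have h1 := hae_trans x {z | ¬ DifferentiableAt ℝ F z}
      (ae_iff.mp (hF.ae_differentiableAt (μ := volume)))
    filter_upwards [h1] with y hy
    simpa using hy
  have hAae : ∀ (x : EuclideanSpace ℝ (Fin N)), ∀ᵐ y ∂μ, (x + y) ∉ (unitCube N \ A) :=
    fun x => hae_trans x _ hA0
  -- integrability of continuous functions
  have hint : ∀ {G : Type} [NormedAddCommGroup G] [NormedSpace ℝ G]
      (g : EuclideanSpace ℝ (Fin N) → G), Continuous g → Integrable g μ := by
    intro G _ _ g hg
    rw [hμdef]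
    refine Integrable.smul_measure ?_ (ENNReal.inv_ne_top.mpr hV0)
    exact hg.continuousOn.integrableOn_compact (isCompact_closedBall 0 r)
  have hconth : Continuous h := by
    rw [hhdef]
    exact (hF.continuous.add (continuous_const.mul
      (((continuous_id.sub continuous_const).norm).pow 2))).add
      (continuous_const.mul (((continuous_id.sub continuous_const).norm).pow 2))
  -- the mollified function
  set hk : EuclideanSpace ℝ (Fin N) → ℝ := fun x => ∫ y, h (x + y) ∂μ with hkdef
  have hinth : ∀ x : EuclideanSpace ℝ (Fin N), Integrable (fun y => h (x + y)) μ :=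
    fun x => hint _ (hconth.comp (continuous_const.add continuous_id))
  -- region arithmetic
  have hmaster : ∀ (x y : EuclideanSpace ℝ (Fin N)), ‖x - xs‖ ≤ θ/2 → ‖y‖ ≤ r →
      ‖x + y - c‖ ≤ θ/2 + 1/4 + r := by
    intro x y h1 h2
    have hxy : x + y - c = ((x - xs) + (xs - c)) + y := by abel
    rw [hxy]
    have n1 := norm_add_le ((x - xs) + (xs - c)) y
    have n2 := norm_add_le (x - xs) (xs - c)
    linarith
  have hnum : θ/2 + 1/4 + r ≤ 5/16 := by linarith
  have hmem34 : ∀ (x : EuclideanSpace ℝ (Fin N)), ‖x - xs‖ ≤ θ/2 →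
      ∀ y ∈ Metric.closedBall (0 : EuclideanSpace ℝ (Fin N)) r,
      x + y ∈ Metric.closedBall c (3/4) := by
    intro x hx y hy
    rw [Metric.mem_closedBall, dist_eq_norm]
    have hy' : ‖y‖ ≤ r := by simpa using hy
    have := hmaster x y hx hy'
    linarith
  have hmemcube : ∀ (x : EuclideanSpace ℝ (Fin N)), ‖x - xs‖ ≤ θ/2 →
      ∀ y ∈ Metric.closedBall (0 : EuclideanSpace ℝ (Fin N)) r, x + y ∈ unitCube N := by
    intro x hx y hy
    apply hcube
    rw [Metric.mem_closedBall, dist_eq_norm]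
    have hy' : ‖y‖ ≤ r := by simpa using hy
    have := hmaster x y hx hy'
    linarith
  have hself34 : ∀ (x : EuclideanSpace ℝ (Fin N)), ‖x - xs‖ ≤ θ/2 →
      x ∈ Metric.closedBall c (3/4) := by
    intro x hx
    rw [Metric.mem_closedBall, dist_eq_norm]
    have hxy : x - c = (x - xs) + (xs - c) := by abel
    rw [hxy]
    have n2 := norm_add_le (x - xs) (xs - c)
    linarith
  -- comparing hk at two points
  have hkdiff : ∀ (x x' : EuclideanSpace ℝ (Fin N)), ‖x - xs‖ ≤ θ/2 → ‖x' - xs‖ ≤ θ/2 →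
      |hk x - hk x'| ≤ L * ‖x - x'‖ := by
    intro x x' hx hx'
    have hsub : hk x - hk x' = ∫ y, (h (x+y) - h (x'+y)) ∂μ :=
      (integral_sub (hinth x) (hinth x')).symm
    rw [hsub]
    have hb := norm_integral_le_of_norm_le_const (μ := μ) (C := L * ‖x - x'‖)
      (f := fun y => h (x+y) - h (x'+y)) ?_
    · simpa [measure_univ, Real.norm_eq_abs] using hb
    · filter_upwards [hae_ball] with y hy
      have hy' : ‖y‖ ≤ r := by simpa using hy
      have := hLip (x+y) (x'+y) (hmem34 x hx y hy) (hmem34 x' hx' y hy)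
      have heq : x + y - (x' + y) = x - x' := by abel
      rw [heq] at this
      simpa [Real.norm_eq_abs] using this
  -- comparing hk with h
  have hkh : ∀ (x : EuclideanSpace ℝ (Fin N)), ‖x - xs‖ ≤ θ/2 → |hk x - h x| ≤ L * r := by
    intro x hx
    have hsub : hk x - h x = ∫ y, (h (x+y) - h x) ∂μ := by
      rw [integral_sub (hinth x) (integrable_const _), integral_const]
      simp [measure_univ]; rfl
    rw [hsub]
    have hb := norm_integral_le_of_norm_le_const (μ := μ) (C := L * r)
      (f := fun y => h (x+y) - h x) ?_
    · simpa [measure_univ, Real.norm_eq_abs] using hb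
    · filter_upwards [hae_ball] with y hy
      have hy' : ‖y‖ ≤ r := by simpa using hy
      have := hLip (x+y) x (hmem34 x hx y hy) (hself34 x hx)
      have heq : x + y - x = y := by abel
      rw [heq] at this
      have hb2 : L * ‖y‖ ≤ L * r := mul_le_mul_of_nonneg_left hy' hL.le
      have h3 : |h (x+y) - h x| ≤ L * r := le_trans this hb2
      simpa [Real.norm_eq_abs] using h3
  -- minimize hk on the closed ball
  have hkcont : ContinuousOn hk (Metric.closedBall xs (θ/2)) := by
    have : LipschitzOnWith (Real.toNNReal L) hk (Metric.closedBall xs (θ/2)) := by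
      apply LipschitzOnWith.of_dist_le_mul
      intro x hx x' hx'
      rw [Real.dist_eq, dist_eq_norm, Real.coe_toNNReal L hL.le]
      exact hkdiff x x' (by simpa [dist_eq_norm] using hx) (by simpa [dist_eq_norm] using hx')
    exact this.continuousOn
  obtain ⟨xk, hxkball, hxkmin⟩ := (isCompact_closedBall xs (θ/2)).exists_isMinOn
    ⟨xs, mem_closedBall_self (by positivity)⟩ hkcont
  have hxkb : ‖xk - xs‖ ≤ θ/2 := by simpa [dist_eq_norm] using hxkball
  -- xk is close to xs
  have hclose : ‖xk - xs‖^2 ≤ θ^2/8 := by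
    have c1 := hkh xk hxkb
    have c2 := hkh xs (by simp [hθ.le]; positivity)
    have c3 : hk xk ≤ hk xs := hxkmin (mem_closedBall_self (by positivity))
    have c4 : F xs + α*‖xs - c‖^2 ≤ F xk + α*‖xk - c‖^2 :=
      hmin xk (by
        apply hcube
        rw [Metric.mem_closedBall, dist_eq_norm]
        have hxy : xk - c = (xk - xs) + (xs - c) := by abel
        rw [hxy]
        have n2 := norm_add_le (xk - xs) (xs - c)
        linarith)
    have c5 : h xs = F xs + α*‖xs - c‖^2 := by simp [hhdef]
    have c6 : h xk = F xk + α*‖xk - c‖^2 + β*‖xk - xs‖^2 := rfl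
    rw [abs_le] at c1 c2
    have : β*‖xk - xs‖^2 ≤ 2*L*r := by linarith
    nlinarith
  have hxklt : ‖xk - xs‖ < θ/2 := by
    nlinarith [norm_nonneg (xk - xs)]
  have hloc : IsLocalMin hk xk :=
    hxkmin.isLocalMin (Metric.closedBall_mem_nhds_of_mem (by
      rw [Metric.mem_ball, dist_eq_norm]; exact hxklt))
  -- the vector field whose average annihilates
  set Gv : EuclideanSpace ℝ (Fin N) → EuclideanSpace ℝ (Fin N) :=
    fun z => gradient F z + ((2*α) • (z - c) + (2*β) • (z - xs)) with hGvdef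
  -- pointwise directional derivative of h
  have hz_der : ∀ z : EuclideanSpace ℝ (Fin N), DifferentiableAt ℝ F z →
      ∀ u : EuclideanSpace ℝ (Fin N),
      HasDerivAt (fun t : ℝ => h (z + t • u)) ((inner ℝ (Gv z) u : ℝ)) 0 := by
    intro z hz u
    have line : HasDerivAt (fun t : ℝ => z + t • u) u 0 := by
      simpa using ((hasDerivAt_id (0:ℝ)).smul_const u).const_add z
    have hd' : HasFDerivAt F (fderiv ℝ F z) ((fun t : ℝ => z + t • u) 0) := by
      simpa using hz.hasFDerivAt
    have p1 : HasDerivAt (fun t : ℝ => F (z + t • u)) (fderiv ℝ F z u) 0 := by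
      have := hd'.comp_hasDerivAt (0:ℝ) line
      exact this
    have p2 : HasDerivAt (fun t : ℝ => α * ‖z + t • u - c‖^2) (2*α*(inner ℝ (z-c) u : ℝ)) 0 := by
      have hfe : (fun t : ℝ => α * ‖z + t • u - c‖^2) = (fun t : ℝ => α * ‖(z - c) + t • u‖^2) := by
        funext t; rw [show z + t • u - c = (z - c) + t • u by abel]
      rw [hfe]; exact quad_line_hasDerivAt (z - c) u α
    have p3 : HasDerivAt (fun t : ℝ => β * ‖z + t • u - xs‖^2) (2*β*(inner ℝ (z-xs) u : ℝ)) 0 := by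
      have hfe : (fun t : ℝ => β * ‖z + t • u - xs‖^2) = (fun t : ℝ => β * ‖(z - xs) + t • u‖^2) := by
        funext t; rw [show z + t • u - xs = (z - xs) + t • u by abel]
      rw [hfe]; exact quad_line_hasDerivAt (z - xs) u β
    have psum := (p1.add p2).add p3
    have hval : (inner ℝ (Gv z) u : ℝ)
        = fderiv ℝ F z u + 2*α*(inner ℝ (z-c) u : ℝ) + 2*β*(inner ℝ (z-xs) u : ℝ) := by
      have hg : (inner ℝ (gradient F z) u : ℝ) = fderiv ℝ F z u := by
        simp [gradient, InnerProductSpace.toDual_symm_apply]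
      rw [hGvdef]
      simp only [inner_add_left, real_inner_smul_left, hg]
      ring
    rw [hval]
    exact psum
  -- the directional derivative of hk at xk
  have hDER : ∀ u : EuclideanSpace ℝ (Fin N),
      HasDerivAt (fun t : ℝ => hk (xk + t • u)) (∫ y, (inner ℝ (Gv (xk + y)) u : ℝ) ∂μ) 0 := by
    intro u
    rw [hasDerivAt_iff_tendsto_slope]
    have hmem1 : ∀ (y : EuclideanSpace ℝ (Fin N)), ‖y‖ ≤ r → ∀ t : ℝ, |t| * ‖u‖ ≤ 1/32 →
        ((xk + y) + t • u) ∈ Metric.closedBall c (3/4) := by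
      intro y hy t ht
      rw [Metric.mem_closedBall, dist_eq_norm]
      have hd : (xk + y) + t • u - c = ((xk - xs) + (xs - c)) + (y + t • u) := by abel
      rw [hd]
      have n1 := norm_add_le ((xk - xs) + (xs - c)) (y + t • u)
      have n2 := norm_add_le (xk - xs) (xs - c)
      have n3 := norm_add_le y (t • u)
      have n4 : ‖t • u‖ = |t| * ‖u‖ := by rw [norm_smul, Real.norm_eq_abs]
      linarith
    have key := tendsto_integral_filter_of_dominated_convergence (μ := μ)
      (l := 𝓝[≠] (0:ℝ))
      (F := fun t y => slope (fun s : ℝ => h ((xk + y) + s • u)) 0 t)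
      (f := fun y => (inner ℝ (Gv (xk + y)) u : ℝ))
      (bound := fun _ => L * (‖u‖ + 1)) ?_ ?_ (integrable_const _) ?_
    · -- transfer via eventual equality of slopes
      refine key.congr' ?_
      filter_upwards [eventually_mem_nhdsWithin] with t ht
      have ht0 : t ≠ 0 := ht
      have ia : Integrable (fun y => h ((xk + y) + t • u)) μ := by
        refine hint _ (hconth.comp ?_)
        exact (continuous_const.add continuous_id).add continuous_const
      have ib : Integrable (fun y => h ((xk + y) + (0:ℝ) • u)) μ := by
        refine hint _ (hconth.comp ?_)
        exact (continuous_const.add continuous_id).add continuous_const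
      have lhs_eq : (∫ y, slope (fun s : ℝ => h ((xk + y) + s • u)) 0 t ∂μ)
          = ((∫ y, h ((xk + y) + t • u) ∂μ) - (∫ y, h ((xk + y) + (0:ℝ) • u) ∂μ)) / (t - 0) := by
        rw [← integral_sub ia ib, ← integral_div]
        congr 1
        funext y
        rw [slope_def_field]
      rw [lhs_eq, slope_def_field]
      congr 1
      · congr 1
        · show (∫ y, h ((xk + y) + t • u) ∂μ) = hk (xk + t • u)
          rw [hkdef]
          congr 1
          funext y
          rw [show (xk + t • u) + y = (xk + y) + t • u by abel]
        · show (∫ y, h ((xk + y) + (0:ℝ) • u) ∂μ) = hk (xk + (0:ℝ) • u)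
          rw [hkdef]
          congr 1
          funext y
          rw [show (xk + (0:ℝ) • u) + y = (xk + y) + (0:ℝ) • u by abel]
    · -- measurability
      refine Eventually.of_forall fun t => ?_
      have : Continuous fun y => slope (fun s : ℝ => h ((xk + y) + s • u)) 0 t := by
        simp only [slope_def_field]
        apply Continuous.div_const
        apply Continuous.sub
        · exact hconth.comp ((continuous_const.add continuous_id).add continuous_const)
        · exact hconth.comp ((continuous_const.add continuous_id).add continuous_const)
      exact this.aestronglyMeasurable
    · -- bound
      have hsm : ∀ᶠ t in 𝓝[≠] (0:ℝ), |t| * ‖u‖ ≤ 1/32 ∧ t ≠ 0 := by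
        have h1 : Tendsto (fun t : ℝ => |t| * ‖u‖) (𝓝 0) (𝓝 (|0| * ‖u‖)) := by
          exact (continuous_abs.mul continuous_const).tendsto 0
        have h1' : ∀ᶠ t in 𝓝 (0:ℝ), |t| * ‖u‖ ≤ 1/32 := by
          have h2 : (|0| * ‖u‖ : ℝ) < 1/32 := by norm_num
          filter_upwards [h1.eventually_lt_const h2] with t ht using ht.le
        exact ((h1'.filter_mono nhdsWithin_le_nhds).and eventually_mem_nhdsWithin)
      filter_upwards [hsm] with t ⟨ht1, ht0⟩
      filter_upwards [hae_ball] with y hy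
      have hy' : ‖y‖ ≤ r := by simpa using hy
      have mem1 := hmem1 y hy' t ht1
      have mem2 : (xk + y) ∈ Metric.closedBall c (3/4) := by
        have := hmem1 y hy' 0 (by simp)
        simpa using this
      have hnum2 : |h ((xk + y) + t • u) - h (xk + y)| ≤ L * (|t| * ‖u‖) := by
        have := hLip ((xk + y) + t • u) (xk + y) mem1 mem2
        rw [show (xk + y) + t • u - (xk + y) = t • u by abel, norm_smul,
          Real.norm_eq_abs] at this
        exact this
      rw [Real.norm_eq_abs, slope_def_field]
      have h00 : (xk + y) + (0:ℝ) • u = xk + y := by simp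
      rw [h00, sub_zero, abs_div]
      have htpos : 0 < |t| := abs_pos.mpr ht0
      rw [div_le_iff₀ htpos]
      calc |h ((xk + y) + t • u) - h (xk + y)| ≤ L * (|t| * ‖u‖) := hnum2
        _ ≤ L * (‖u‖ + 1) * |t| := by nlinarith [norm_nonneg u, abs_nonneg t]
    · -- pointwise convergence
      filter_upwards [hdiffae xk] with y hy
      have := (hz_der (xk + y) hy u)
      rw [hasDerivAt_iff_tendsto_slope] at this
      exact this
  -- first order condition
  have hcrit : ∀ u : EuclideanSpace ℝ (Fin N), (∫ y, (inner ℝ (Gv (xk + y)) u : ℝ) ∂μ) = 0 := by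
    intro u
    have tline : Tendsto (fun t : ℝ => xk + t • u) (𝓝 0) (𝓝 xk) := by
      have hc : Continuous (fun t : ℝ => xk + t • u) :=
        continuous_const.add (continuous_id.smul continuous_const)
      have := hc.tendsto 0
      simpa using this
    have locmin : IsLocalMin (fun t : ℝ => hk (xk + t • u)) 0 := by
      have hev := tline.eventually hloc
      refine hev.mono fun t ht => ?_
      simpa using ht
    exact locmin.hasDerivAt_eq_zero (hDER u)
  -- integrability of the pieces
  have hgradmeas : AEStronglyMeasurable (fun y => gradient F (xk + y)) μ := by
    have m1 : Measurable (fun z : EuclideanSpace ℝ (Fin N) => gradient F z) := by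
      have : Measurable (fderiv ℝ F) := measurable_fderiv ℝ F
      exact ((InnerProductSpace.toDual ℝ
        (EuclideanSpace ℝ (Fin N))).symm.continuous.measurable).comp this
    exact ((m1.comp (measurable_const.add measurable_id)).aestronglyMeasurable)
  have hgradbd : ∀ z : EuclideanSpace ℝ (Fin N), ‖gradient F z‖ ≤ K := by
    intro z
    have heq : ‖gradient F z‖ = ‖fderiv ℝ F z‖ := by
      rw [gradient]
      exact LinearIsometryEquiv.norm_map _ _
    rw [heq]
    exact norm_fderiv_le_of_lipschitz ℝ hF
  have hgradint : Integrable (fun y => gradient F (xk + y)) μ :=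
    Integrable.mono' (integrable_const K) hgradmeas
      (Eventually.of_forall fun y => hgradbd _)
  have hwint : Integrable
      (fun y => (2*α) • ((xk + y) - c) + (2*β) • ((xk + y) - xs)) μ := by
    refine hint _ ?_
    apply Continuous.add
    · fun_prop
    · fun_prop
  have hGvint : Integrable (fun y => Gv (xk + y)) μ := by
    have := hgradint.add hwint
    exact this
  -- the average of Gv is zero
  set M : EuclideanSpace ℝ (Fin N) := ∫ y, Gv (xk + y) ∂μ with hMdef
  have hM0 : M = 0 := by
    have hMu : ∀ u : EuclideanSpace ℝ (Fin N), (inner ℝ u M : ℝ) = 0 := by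
      intro u
      have hcomm := ContinuousLinearMap.integral_comp_comm (innerSL ℝ u) hGvint
      have h1 : (∫ y, (inner ℝ u (Gv (xk + y)) : ℝ) ∂μ) = (inner ℝ u M : ℝ) := hcomm
      rw [← h1]
      have h2 : (fun y => (inner ℝ u (Gv (xk + y)) : ℝ))
          = fun y => (inner ℝ (Gv (xk + y)) u : ℝ) := by
        funext y; exact real_inner_comm _ _
      rw [h2]
      exact hcrit u
    have := hMu M
    rwa [inner_self_eq_zero] at this
  have hsplit : M = (∫ y, gradient F (xk + y) ∂μ)
      + ∫ y, ((2*α) • ((xk + y) - c) + (2*β) • ((xk + y) - xs)) ∂μ := by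
    rw [hMdef]
    exact integral_add hgradint hwint
  have hwbd : ‖∫ y, ((2*α) • ((xk + y) - c) + (2*β) • ((xk + y) - xs)) ∂μ‖ ≤ α + β := by
    have hb := norm_integral_le_of_norm_le_const (μ := μ) (C := α + β)
      (f := fun y => (2*α) • ((xk + y) - c) + (2*β) • ((xk + y) - xs)) ?_
    · simpa [measure_univ] using hb
    · filter_upwards [hae_ball] with y hy
      have hy' : ‖y‖ ≤ r := by simpa using hy
      have b1 : ‖(xk + y) - c‖ ≤ 5/16 := le_trans (hmaster xk y hxkb hy') hnum
      have b2 : ‖(xk + y) - xs‖ ≤ θ/2 + r := by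
        have hd : (xk + y) - xs = (xk - xs) + y := by abel
        rw [hd]
        have := norm_add_le (xk - xs) y
        linarith
      have n1 := norm_add_le ((2*α) • ((xk + y) - c)) ((2*β) • ((xk + y) - xs))
      have n2 : ‖(2*α) • ((xk + y) - c)‖ = (2*α) * ‖(xk + y) - c‖ := by
        rw [norm_smul, Real.norm_eq_abs, abs_of_pos (by positivity)]
      have n3 : ‖(2*β) • ((xk + y) - xs)‖ = (2*β) * ‖(xk + y) - xs‖ := by
        rw [norm_smul, Real.norm_eq_abs, abs_of_pos (by positivity)]
      have e1 : (2*α) * ‖(xk + y) - c‖ ≤ (2*α) * (5/16) :=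
        mul_le_mul_of_nonneg_left b1 (by positivity)
      have e2 : (2*β) * ‖(xk + y) - xs‖ ≤ (2*β) * (1/16) := by
        apply mul_le_mul_of_nonneg_left _ (by positivity)
        linarith
      calc ‖(2*α) • ((xk + y) - c) + (2*β) • ((xk + y) - xs)‖
          ≤ ‖(2*α) • ((xk + y) - c)‖ + ‖(2*β) • ((xk + y) - xs)‖ := n1
        _ ≤ (2*α) * (5/16) + (2*β) * (1/16) := by rw [n2, n3]; linarith
        _ ≤ α + β := by nlinarith
  refine ⟨∫ y, gradient F (xk + y) ∂μ, ?_, ?_⟩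
  · have hneg : (∫ y, gradient F (xk + y) ∂μ)
        = - ∫ y, ((2*α) • ((xk + y) - c) + (2*β) • ((xk + y) - xs)) ∂μ := by
      have h0 : (0 : EuclideanSpace ℝ (Fin N)) = (∫ y, gradient F (xk + y) ∂μ)
          + ∫ y, ((2*α) • ((xk + y) - c) + (2*β) • ((xk + y) - xs)) ∂μ := by
        rw [← hsplit]; exact hM0.symm
      exact eq_neg_of_add_eq_zero_left h0.symm
    rw [hneg, norm_neg]
    exact hwbd
  · refine Convex.integral_mem ((convex_convexHull ℝ _).closure) isClosed_closure ?_ hgradint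
    filter_upwards [hae_ball, hAae xk, hdiffae xk] with y hy hyA hyD
    have hy' : ‖y‖ ≤ r := by simpa using hy
    refine subset_closure (subset_convexHull ℝ _ (Set.mem_image_of_mem _ ?_))
    refine ⟨⟨?_, ?_⟩, hyD⟩
    · rw [Metric.mem_closedBall, dist_eq_norm]
      have hd : (xk + y) - xs = (xk - xs) + y := by abel
      rw [hd]
      have := norm_add_le (xk - xs) y
      linarith
    · by_contra hnA
      exact hyA ⟨hmemcube xk hxkb y (by simpa [dist_eq_norm] using hy'), hnA⟩


set_option maxHeartbeats 2000000 in
theorem stmt0 (N : ℕ) (hN : 0 < N) (δ K : ℝ) (hδ : 0 < δ) (hK : 0 < K) :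
    ∃ ε > (0 : ℝ),
      ∀ f : EuclideanSpace ℝ (Fin N) → ℝ,
        LipschitzOnWith (Real.toNNReal K) f (unitCube N) →
        (∀ x ∈ unitCube N, ∀ y ∈ unitCube N, f x - f y ≤ 2 * ε) →
        ∀ A : Set (EuclideanSpace ℝ (Fin N)), A ⊆ unitCube N →
          volume (unitCube N \ A) = 0 →
          ∃ (τ : Fin (N + 1) → ℕ → EuclideanSpace ℝ (Fin N))
            (τlim : EuclideanSpace ℝ (Fin N))
            (v : Fin (N + 1) → EuclideanSpace ℝ (Fin N)),
            (∀ i : Fin N, τlim i ∈ Set.Ioo (0 : ℝ) 1) ∧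
            (∀ j m, τ j m ∈ A) ∧
            (∀ j, Tendsto (τ j) atTop (nhds τlim)) ∧
            (∀ j m, DifferentiableAt ℝ f (τ j m)) ∧
            (∀ j, Tendsto (fun m => gradient f (τ j m)) atTop (nhds (v j))) ∧
            Metric.infDist 0 (convexHull ℝ (Set.range v)) < δ := by
  classical
  set α : ℝ := δ/4 with hαdef
  set β : ℝ := δ/2 with hβdef
  have hα : 0 < α := by positivity
  have hβ : 0 < β := by positivity
  refine ⟨δ/128, by positivity, ?_⟩
  intro f hlip hosc A hAsub hA0
  -- the center of the cube
  set c : EuclideanSpace ℝ (Fin N) := WithLp.toLp 2 (fun _ => (1:ℝ)/2 : Fin N → ℝ) with hcdef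
  have hci : ∀ i, c i = 1/2 := fun i => rfl
  have hcball : ∀ x : EuclideanSpace ℝ (Fin N), ‖x - c‖ ≤ 1/2 → x ∈ unitCube N := by
    intro x hx
    intro i _
    have h1 : |x i - 1/2| ≤ ‖x - c‖ := by
      have h3 := euclid_coord_abs_le (x - c) i
      have h2 : (x - c) i = x i - c i := rfl
      rw [h2, hci i] at h3
      exact h3
    rw [abs_le] at h1
    rw [Set.mem_Icc]
    constructor <;> [linarith [h1.1]; linarith [h1.2]]
  have hcube : Metric.closedBall c (1/2) ⊆ unitCube N := by
    intro x hx
    exact hcball x (by simpa [dist_eq_norm] using hx)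
  have hccube : c ∈ unitCube N := hcball c (by simp)
  -- the unit cube is compact
  have hcompact : IsCompact (unitCube N) := by
    apply Metric.isCompact_of_isClosed_isBounded
    · have : unitCube N = ⋂ i, (fun x : EuclideanSpace ℝ (Fin N) => x i) ⁻¹' Set.Icc 0 1 := by
        ext x
        simp only [unitCube, Set.mem_iInter, Set.mem_preimage]
        exact ⟨fun h i => h i (Set.mem_univ i), fun h i _ => h i⟩
      rw [this]
      refine isClosed_iInter fun i => IsClosed.preimage ?_ isClosed_Icc
      exact (EuclideanSpace.proj (𝕜 := ℝ) i).continuous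
    · apply (Metric.isBounded_closedBall (x := c) (r := N)).subset
      intro x hx
      rw [Metric.mem_closedBall, dist_eq_norm]
      refine (euclid_norm_le_of_coord (x - c) 1 one_pos.le ?_).trans (by norm_num)
      intro i
      have h2 : (x - c) i = x i - c i := rfl
      rw [h2, hci i]
      have h4 := hx i (Set.mem_univ i)
      rw [Set.mem_Icc] at h4
      rw [abs_le]
      constructor <;> [linarith [h4.1]; linarith [h4.2]]
  -- extend f to a globally Lipschitz function
  obtain ⟨F, hF, hEq⟩ := hlip.extend_real
  have hKK : ((Real.toNNReal K : NNReal) : ℝ) = K := Real.coe_toNNReal K hK.le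
  -- minimize the penalized function over the cube
  have contG : ContinuousOn (fun x => F x + α * ‖x - c‖^2) (unitCube N) := by
    apply Continuous.continuousOn
    exact hF.continuous.add (continuous_const.mul
      (((continuous_id.sub continuous_const).norm).pow 2))
  obtain ⟨xs, hxscube, hxsmin⟩ := hcompact.exists_isMinOn ⟨c, hccube⟩ contG
  have hmin : ∀ x ∈ unitCube N, F xs + α * ‖xs - c‖^2 ≤ F x + α * ‖x - c‖^2 :=
    fun x hx => hxsmin hx
  have hxc : ‖xs - c‖ ≤ 1/4 := by
    have h1 : F xs + α * ‖xs - c‖^2 ≤ F c + α * ‖c - c‖^2 := hmin c hccube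
    have h2 : F c - F xs ≤ 2 * (δ/128) := by
      have := hosc c hccube xs hxscube
      rwa [← hEq hccube, ← hEq hxscube]
    have h3 : α * ‖xs - c‖^2 ≤ δ/64 := by
      have : ‖c - c‖ = 0 := by simp
      rw [this] at h1
      nlinarith
    have h4 : ‖xs - c‖^2 ≤ 1/16 := by
      rw [hαdef] at h3
      nlinarith
    nlinarith [norm_nonneg (xs - c)]
  -- gradient bound
  have hgradbd : ∀ z : EuclideanSpace ℝ (Fin N), ‖gradient F z‖ ≤ K := by
    intro z
    have heq : ‖gradient F z‖ = ‖fderiv ℝ F z‖ := by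
      rw [gradient]
      exact LinearIsometryEquiv.norm_map _ _
    rw [heq]
    have := norm_fderiv_le_of_lipschitz ℝ hF (x₀ := z)
    rwa [hKK] at this
  -- the scale family
  set θ : ℕ → ℝ := fun m => min (1/16) (1/(m+1)) with hθdef
  have hθpos : ∀ m, 0 < θ m := fun m => lt_min (by norm_num) (by positivity)
  have hθle : ∀ m, θ m ≤ 1/16 := fun m => min_le_left _ _
  -- main per-scale construction
  have main : ∀ m : ℕ, ∃ (a : Fin (N+1) → ℝ) (z : Fin (N+1) → EuclideanSpace ℝ (Fin N)),
      (∀ j, z j ∈ A) ∧ (∀ j, ‖z j - xs‖ ≤ θ m) ∧ (∀ j, DifferentiableAt ℝ F (z j)) ∧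
      (∀ j, 0 ≤ a j) ∧ ((∑ j, a j) = 1) ∧
      ‖∑ j, a j • gradient F (z j)‖ ≤ 7*δ/8 := by
    intro m
    obtain ⟨p, hpnorm, hpmem⟩ := key_scale (Real.toNNReal K) F hF A hA0 xs c α β hα hβ
      hxc hcube hmin (θ m) (hθpos m) (hθle m)
    have hpnorm' : ‖p‖ ≤ 3*δ/4 := by
      rw [hαdef, hβdef] at hpnorm; linarith
    obtain ⟨q, hqmem, hqdist⟩ := Metric.mem_closure_iff.mp hpmem (δ/8) (by positivity)
    have hqnorm : ‖q‖ ≤ 7*δ/8 := by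
      have := norm_le_norm_add_norm_sub' q p  -- check
      have hd : ‖p - q‖ < δ/8 := by rwa [dist_eq_norm] at hqdist
      calc ‖q‖ = ‖p - (p - q)‖ := by congr 1; abel
        _ ≤ ‖p‖ + ‖p - q‖ := norm_sub_le _ _
        _ ≤ 7*δ/8 := by linarith
    obtain ⟨ι, hfin, zz, w, hrange, haff, hwpos, hwsum, hwcomb⟩ :=
      eq_pos_convex_span_of_mem_convexHull hqmem
    letI := hfin
    haveI : Nonempty ι := by
      by_contra hne
      rw [not_nonempty_iff] at hne
      rw [Finset.univ_eq_empty, Finset.sum_empty] at hwsum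
      norm_num at hwsum
    have hcard : Fintype.card ι ≤ N + 1 := by
      have h1 := haff.card_le_finrank_succ
      have h2 : Module.finrank ℝ (vectorSpan ℝ (Set.range zz))
          ≤ Module.finrank ℝ (EuclideanSpace ℝ (Fin N)) := Submodule.finrank_le _
      have h3 : Module.finrank ℝ (EuclideanSpace ℝ (Fin N)) = N := by simp
      omega
    obtain ⟨a, y, hys, ha0, ha1, hasum⟩ := pad_convex ι hcard zz w
      (fun i => hrange (Set.mem_range_self i)) (fun i => (hwpos i).le) hwsum
    have hzex : ∀ j, ∃ zp, (zp ∈ Metric.closedBall xs (θ m) ∩ A ∩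
        {z | DifferentiableAt ℝ F z}) ∧ gradient F zp = y j := by
      intro j
      obtain ⟨zp, hzp1, hzp2⟩ := hys j
      exact ⟨zp, hzp1, hzp2⟩
    choose z hz1 hz2 using hzex
    refine ⟨a, z, ?_, ?_, ?_, ha0, ha1, ?_⟩
    · exact fun j => (hz1 j).1.2
    · intro j
      have := (hz1 j).1.1
      simpa [dist_eq_norm] using this
    · exact fun j => (hz1 j).2
    · have : (∑ j, a j • gradient F (z j)) = q := by
        rw [← hwcomb, ← hasum]
        exact Finset.sum_congr rfl fun j _ => by rw [hz2 j]
      rw [this]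
      exact hqnorm
  choose a z hzA hzθ hzD ha0 ha1 hnorm using main
  -- compactness extraction
  set Q : Set ((Fin (N+1) → ℝ) × (Fin (N+1) → EuclideanSpace ℝ (Fin N))) :=
    (Set.univ.pi fun _ => Set.Icc (0:ℝ) 1) ×ˢ
      (Set.univ.pi fun _ => Metric.closedBall (0 : EuclideanSpace ℝ (Fin N)) K) with hQdef
  have hQcomp : IsCompact Q := by
    refine IsCompact.prod ?_ ?_
    · exact isCompact_univ_pi fun _ => isCompact_Icc
    · exact isCompact_univ_pi fun _ => isCompact_closedBall _ _
  have hQmem : ∀ m, (a m, fun j => gradient F (z m j)) ∈ Q := by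
    intro m
    constructor
    · intro j _
      refine ⟨ha0 m j, ?_⟩
      calc a m j ≤ ∑ i, a m i :=
            Finset.single_le_sum (f := a m) (fun i _ => ha0 m i) (Finset.mem_univ j)
        _ = 1 := ha1 m
    · intro j _
      simpa using hgradbd (z m j)
  obtain ⟨⟨av, vv⟩, hQm, φ, hφ, hconv⟩ :=
    hQcomp.tendsto_subseq (x := fun m => (a m, fun j => gradient F (z m j))) hQmem
  have hconv1 : ∀ j, Tendsto (fun m => a (φ m) j) atTop (nhds (av j)) := by
    intro j
    exact (((continuous_apply j).comp continuous_fst).tendsto _).comp hconv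
  have hconv2 : ∀ j, Tendsto (fun m => gradient F (z (φ m) j)) atTop (nhds (vv j)) := by
    intro j
    exact (((continuous_apply j).comp continuous_snd).tendsto _).comp hconv
  -- points are interior points of the cube where f = F near
  have hnear : ∀ (zz : EuclideanSpace ℝ (Fin N)), ‖zz - xs‖ ≤ 1/16 → f =ᶠ[nhds zz] F := by
    intro zz hzz
    refine Filter.eventuallyEq_of_mem (Filter.mem_of_superset
      (Metric.ball_mem_nhds zz (by norm_num : (0:ℝ) < 1/8)) ?_) hEq
    intro x hx
    apply hcube
    rw [Metric.mem_closedBall, dist_eq_norm]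
    have h1 : ‖x - zz‖ < 1/8 := by simpa [dist_eq_norm] using hx
    have hd : x - c = (x - zz) + (zz - xs) + (xs - c) := by abel
    rw [hd]
    have n1 := norm_add_le ((x - zz) + (zz - xs)) (xs - c)
    have n2 := norm_add_le (x - zz) (zz - xs)
    linarith
  have hzθ' : ∀ m j, ‖z m j - xs‖ ≤ 1/16 := fun m j => (hzθ m j).trans (hθle m)
  have hdifff : ∀ m j, DifferentiableAt ℝ f (z m j) := by
    intro m j
    exact ((hnear (z m j) (hzθ' m j)).differentiableAt_iff).mpr (hzD m j)
  have hgradeq : ∀ m j, gradient f (z m j) = gradient F (z m j) := by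
    intro m j
    rw [gradient, gradient, (hnear (z m j) (hzθ' m j)).fderiv_eq]
  -- final data
  refine ⟨fun j m => z (φ m) j, xs, vv, ?_, ?_, ?_, ?_, ?_, ?_⟩
  · -- interior
    intro i
    have h1 : |xs i - 1/2| ≤ ‖xs - c‖ := by
      have h3 := euclid_coord_abs_le (xs - c) i
      have h2 : (xs - c) i = xs i - c i := rfl
      rw [h2, hci i] at h3
      exact h3
    rw [abs_le] at h1
    constructor <;> [linarith [h1.1]; linarith [h1.2]]
  · exact fun j m => hzA (φ m) j
  · -- convergence of the points
    intro j
    rw [tendsto_iff_dist_tendsto_zero]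
    have hb : ∀ m : ℕ, dist (z (φ m) j) xs ≤ 1/((m:ℝ)+1) := by
      intro m
      rw [dist_eq_norm]
      refine (hzθ (φ m) j).trans ((min_le_right _ _).trans ?_)
      have h1 : (m:ℝ)+1 ≤ (φ m : ℝ)+1 := by
        exact_mod_cast Nat.succ_le_succ hφ.le_apply
      exact one_div_le_one_div_of_le (by positivity) h1
    exact squeeze_zero (fun m => dist_nonneg) hb
      tendsto_one_div_add_atTop_nhds_zero_nat
  · exact fun j m => hdifff (φ m) j
  · intro j
    refine (hconv2 j).congr fun m => ?_
    exact (hgradeq (φ m) j).symm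
  · -- the convex hull distance
    set p : EuclideanSpace ℝ (Fin N) := ∑ j, av j • vv j with hpdef
    have hptend : Tendsto (fun m => ∑ j, a (φ m) j • gradient F (z (φ m) j)) atTop (nhds p) := by
      rw [hpdef]
      exact tendsto_finset_sum _ fun j _ => (hconv1 j).smul (hconv2 j)
    have hpnorm : ‖p‖ ≤ 7*δ/8 :=
      le_of_tendsto' hptend.norm fun m => hnorm (φ m)
    have hsum1 : (∑ j, av j) = 1 := by
      have h1 : Tendsto (fun m => ∑ j, a (φ m) j) atTop (nhds (∑ j, av j)) :=
        tendsto_finset_sum _ fun j _ => hconv1 j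
      have h2 : Tendsto (fun m : ℕ => (1:ℝ)) atTop (nhds 1) := tendsto_const_nhds
      exact tendsto_nhds_unique (h1.congr fun m => ha1 (φ m)) h2
    have hav0 : ∀ j, 0 ≤ av j := fun j => (hQm.1 j (Set.mem_univ j)).1
    have hpmem : p ∈ convexHull ℝ (Set.range vv) := by
      have := Finset.centerMass_mem_convexHull (Finset.univ) (w := av)
        (fun i _ => hav0 i) (by rw [hsum1]; norm_num)
        (fun i _ => (Set.mem_range_self i : vv i ∈ Set.range vv))
      rwa [Finset.centerMass, hsum1, inv_one, one_smul] at this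
    calc Metric.infDist 0 (convexHull ℝ (Set.range vv)) ≤ dist 0 p :=
          Metric.infDist_le_dist_of_mem hpmem
      _ = ‖p‖ := by rw [dist_zero_left]
      _ ≤ 7*δ/8 := hpnorm
      _ < δ := by linarith
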